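/- Fix n ≥ 1 and k ≥ 1. For u ∈ C_c^∞(ℝ^n) (smooth and compactly supported) and 0 ≤ j ≤ k, define the weighted norms D_j(u) = ‖ |∇^j u(z)| · ⟨z⟩^{j + (1−n)/2} ‖_{L²(ℝ^n)}, where ⟨z⟩ = (1 + |z|²)^{1/2} and |∇^j u| denotes the norm of the j-th total derivative. Then for every ν > 0 and every 0 ≤ j < k there exists a constant C(ν, j, k, n), independent of u, such that D_j(u) ≤ ν D_k(u) + C(ν, j, k, n) D_0(u). -/

import Mathlib

open MeasureTheory

/-- The weighted norm `D_j(u) = ‖ |∇ʲu(z)| ⟨z⟩^{j+(1−n)/2} ‖_{L²(ℝⁿ)}`, where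
`⟨z⟩ = √(1+|z|²)` is the Japanese bracket. -/
noncomputable def Dnorm (n j : ℕ) (u : EuclideanSpace ℝ (Fin n) → ℝ) : ℝ :=
  Real.sqrt (∫ z : EuclideanSpace ℝ (Fin n),
    (‖iteratedFDeriv ℝ j u z‖ * Real.sqrt (1 + ‖z‖^2) ^ ((j:ℝ) + (1 - (n:ℝ))/2))^2)

namespace Stmt11

noncomputable def JB (n : ℕ) (a : ℝ) (z : EuclideanSpace ℝ (Fin n)) : ℝ :=
  (1 + ‖z‖^2) ^ (a/2)

variable {n : ℕ}

lemma base_pos (z : EuclideanSpace ℝ (Fin n)) : (0:ℝ) < 1 + ‖z‖^2 := by positivity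

lemma JB_pos (a : ℝ) (z : EuclideanSpace ℝ (Fin n)) : 0 < JB n a z :=
  Real.rpow_pos_of_pos (base_pos z) _

lemma JB_nonneg (a : ℝ) (z : EuclideanSpace ℝ (Fin n)) : 0 ≤ JB n a z := (JB_pos a z).le

lemma JB_mul (a b : ℝ) (z : EuclideanSpace ℝ (Fin n)) : JB n a z * JB n b z = JB n (a+b) z := by
  rw [JB, JB, JB, ← Real.rpow_add (base_pos z)]; ring_nf

lemma JB_sq (a : ℝ) (z : EuclideanSpace ℝ (Fin n)) : JB n a z ^ 2 = JB n (2*a) z := by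
  rw [sq, JB_mul]; ring_nf

lemma abs_JB (a : ℝ) (z : EuclideanSpace ℝ (Fin n)) : |JB n a z| = JB n a z :=
  abs_of_nonneg (JB_nonneg a z)

lemma contDiff_JB (a : ℝ) : ContDiff ℝ (⊤:ℕ∞) (JB n a) := by
  have h1 : ContDiff ℝ (⊤:ℕ∞) (fun z : EuclideanSpace ℝ (Fin n) => 1 + ‖z‖^2) :=
    contDiff_const.add (contDiff_norm_sq ℝ)
  exact h1.rpow contDiff_const (fun z => (base_pos z).ne')

lemma continuous_JB (a : ℝ) : Continuous (JB n a) := (contDiff_JB a).continuous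

lemma JB_hasFDerivAt (a : ℝ) (z : EuclideanSpace ℝ (Fin n)) :
    HasFDerivAt (JB n a) ((a * (1 + ‖z‖^2) ^ (a/2-1)) • (innerSL ℝ z)) z := by
  have hb : HasFDerivAt (fun z : EuclideanSpace ℝ (Fin n) => 1 + ‖z‖^2)
      ((2:ℕ) • (innerSL ℝ z)) z :=
    by simpa using (hasStrictFDerivAt_norm_sq z).hasFDerivAt.const_add 1
  have hr : HasDerivAt (fun x : ℝ => x ^ (a/2)) ((a/2) * (1 + ‖z‖^2) ^ (a/2 - 1)) (1 + ‖z‖^2) :=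
    Real.hasDerivAt_rpow_const (Or.inl (base_pos z).ne')
  have := hr.comp_hasFDerivAt z hb
  refine this.congr_fderiv ?_
  ext v
  simp only [ContinuousLinearMap.smul_apply, ContinuousLinearMap.coe_smul', Pi.smul_apply,
    nsmul_eq_mul, smul_eq_mul]
  push_cast
  ring

lemma differentiable_JB (a : ℝ) : Differentiable ℝ (JB n a) :=
  fun z => (JB_hasFDerivAt a z).differentiableAt

lemma abs_fderiv_JB_le (a : ℝ) (z : EuclideanSpace ℝ (Fin n)) {v : EuclideanSpace ℝ (Fin n)}
    (hv : ‖v‖ ≤ 1) : |fderiv ℝ (JB n a) z v| ≤ |a| * JB n (a-1) z := by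
  rw [(JB_hasFDerivAt a z).fderiv]
  have hinner : |(innerSL ℝ z) v| ≤ ‖z‖ := by
    calc |(innerSL ℝ z) v| = |inner ℝ z v| := rfl
    _ ≤ ‖z‖ * ‖v‖ := abs_real_inner_le_norm z v
    _ ≤ ‖z‖ * 1 := by gcongr
    _ = ‖z‖ := mul_one _
  have hz : ‖z‖ ≤ (1 + ‖z‖^2) ^ (1/2 : ℝ) := by
    rw [← Real.sqrt_eq_rpow]
    nth_rewrite 1 [show ‖z‖ = Real.sqrt (‖z‖^2) from (Real.sqrt_sq (norm_nonneg z)).symm]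
    exact Real.sqrt_le_sqrt (by linarith)
  have hpos : (0:ℝ) < (1 + ‖z‖^2) ^ (a/2-1 : ℝ) := Real.rpow_pos_of_pos (base_pos z) _
  have h1 : ((a * (1 + ‖z‖^2) ^ (a/2-1)) • (innerSL ℝ z)) v
      = (a * (1 + ‖z‖^2) ^ (a/2-1)) * ((innerSL ℝ z) v) := rfl
  rw [h1, abs_mul, abs_mul, abs_of_nonneg hpos.le]
  calc |a| * (1 + ‖z‖^2) ^ (a/2-1) * |(innerSL ℝ z) v|
      ≤ |a| * (1 + ‖z‖^2) ^ (a/2-1) * ((1 + ‖z‖^2) ^ (1/2:ℝ)) := by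
        apply mul_le_mul_of_nonneg_left (hinner.trans hz) (by positivity)
    _ = |a| * JB n (a-1) z := by
        rw [mul_assoc, ← Real.rpow_add (base_pos z), JB]
        ring_nf

lemma continuous_fderiv_JB (a : ℝ) (v : EuclideanSpace ℝ (Fin n)) :
    Continuous (fun z => fderiv ℝ (JB n a) z v) := by
  have h := (contDiff_JB (n := n) a).continuous_fderiv (by simp)
  exact (ContinuousLinearMap.apply ℝ ℝ v).continuous.comp h


variable {n : ℕ}

noncomputable def gco (n : ℕ) (u : EuclideanSpace ℝ (Fin n) → ℝ) (j : ℕ) (m : Fin j → Fin n)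
    (z : EuclideanSpace ℝ (Fin n)) : ℝ :=
  iteratedFDeriv ℝ j u z (fun i => EuclideanSpace.single (m i) 1)

variable {u : EuclideanSpace ℝ (Fin n) → ℝ}

lemma contDiff_itF (hu : ContDiff ℝ (⊤:ℕ∞) u) (j : ℕ) :
    ContDiff ℝ (⊤:ℕ∞) (iteratedFDeriv ℝ j u) :=
  hu.iteratedFDeriv_right (by exact_mod_cast le_top)

lemma contDiff_gco (hu : ContDiff ℝ (⊤:ℕ∞) u) (j : ℕ) (m : Fin j → Fin n) :
    ContDiff ℝ (⊤:ℕ∞) (gco n u j m) :=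
  (ContinuousMultilinearMap.apply ℝ (fun _ : Fin j => EuclideanSpace ℝ (Fin n)) ℝ
    (fun i => EuclideanSpace.single (m i) 1)).contDiff.comp (contDiff_itF hu j)

lemma continuous_gco (hu : ContDiff ℝ (⊤:ℕ∞) u) (j : ℕ) (m : Fin j → Fin n) :
    Continuous (gco n u j m) := (contDiff_gco hu j m).continuous

lemma differentiable_gco (hu : ContDiff ℝ (⊤:ℕ∞) u) (j : ℕ) (m : Fin j → Fin n) :
    Differentiable ℝ (gco n u j m) :=
  (contDiff_gco hu j m).differentiable (by simp)

lemma hasCompactSupport_gco (hc : HasCompactSupport u) (j : ℕ) (m : Fin j → Fin n) :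
    HasCompactSupport (gco n u j m) := by
  have h := (hc.iteratedFDeriv (𝕜 := ℝ) j).comp_left
    (g := fun T : ContinuousMultilinearMap ℝ (fun _ : Fin j => EuclideanSpace ℝ (Fin n)) ℝ =>
      T (fun i => EuclideanSpace.single (m i) 1)) (by simp)
  exact h

lemma fderiv_gco (hu : ContDiff ℝ (⊤:ℕ∞) u) (j : ℕ) (m : Fin j → Fin n) (i : Fin n)
    (z : EuclideanSpace ℝ (Fin n)) :
    fderiv ℝ (gco n u j m) z (EuclideanSpace.single i 1) = gco n u (j+1) (Fin.cons i m) z := by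
  have hd : DifferentiableAt ℝ (iteratedFDeriv ℝ j u) z :=
    ((contDiff_itF hu j).differentiable (by simp)) z
  have h1 := fderiv_continuousMultilinear_apply_const_apply hd
    (fun t => EuclideanSpace.single (m t) 1) (EuclideanSpace.single i 1)
  rw [show gco n u j m = fun z => iteratedFDeriv ℝ j u z (fun t => EuclideanSpace.single (m t) 1)
    from rfl]
  rw [h1]
  have h2 := iteratedFDeriv_succ_apply_left
    (𝕜 := ℝ) (f := u) (n := j) (x := z)
    (fun t : Fin (j+1) => EuclideanSpace.single ((Fin.cons i m : Fin (j+1) → Fin n) t) 1)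
  rw [show gco n u (j+1) (Fin.cons i m) z
    = iteratedFDeriv ℝ (j+1) u z
        (fun t : Fin (j+1) => EuclideanSpace.single ((Fin.cons i m : Fin (j+1) → Fin n) t) 1)
    from rfl, h2]
  have h3 : (Fin.cons i m : Fin (j+1) → Fin n) 0 = i := rfl
  have h4 : Fin.tail (fun t : Fin (j+1) =>
      EuclideanSpace.single ((Fin.cons i m : Fin (j+1) → Fin n) t) (1:ℝ))
      = fun t : Fin j => EuclideanSpace.single (m t) (1:ℝ) := by
    funext t
    simp [Fin.tail]
  rw [h3, h4]

lemma abs_gco_le (j : ℕ) (m : Fin j → Fin n) (z : EuclideanSpace ℝ (Fin n)) :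
    |gco n u j m z| ≤ ‖iteratedFDeriv ℝ j u z‖ := by
  have := (iteratedFDeriv ℝ j u z).le_opNorm (fun i => EuclideanSpace.single (m i) 1)
  simpa [gco] using this

lemma norm_itF_le_sum (j : ℕ) (z : EuclideanSpace ℝ (Fin n)) :
    ‖iteratedFDeriv ℝ j u z‖ ≤ ∑ m : Fin j → Fin n, |gco n u j m z| := by
  apply ContinuousMultilinearMap.opNorm_le_bound
  · positivity
  intro v
  set T := iteratedFDeriv ℝ j u z
  have hv : ∀ i : Fin j, v i = ∑ c : Fin n, (v i c) • EuclideanSpace.single c (1:ℝ) := by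
    intro i
    have := (EuclideanSpace.basisFun (Fin n) ℝ).toBasis.sum_repr (v i)
    simpa [EuclideanSpace.basisFun_apply] using this.symm
  have hveq : v = fun i => ∑ c : Fin n, (v i c) • EuclideanSpace.single c (1:ℝ) := funext hv
  have hexp : T v = ∑ r : Fin j → Fin n,
      (∏ i, v i (r i)) • T (fun i => EuclideanSpace.single (r i) (1:ℝ)) := by
    conv_lhs => rw [hveq]
    rw [T.map_sum (g := fun i c => (v i c) • EuclideanSpace.single c (1:ℝ))]
    apply Finset.sum_congr rfl
    intro r _
    exact T.map_smul_univ (fun i => v i (r i)) (fun i => EuclideanSpace.single (r i) (1:ℝ))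
  rw [hexp]
  calc ‖∑ r : Fin j → Fin n, (∏ i, v i (r i)) • T (fun i => EuclideanSpace.single (r i) (1:ℝ))‖
      ≤ ∑ r : Fin j → Fin n, ‖(∏ i, v i (r i)) • T (fun i => EuclideanSpace.single (r i) (1:ℝ))‖ :=
        norm_sum_le _ _
    _ ≤ ∑ r : Fin j → Fin n, |gco n u j r z| * ∏ i, ‖v i‖ := by
        apply Finset.sum_le_sum
        intro r _
        rw [norm_smul]
        simp only [Real.norm_eq_abs]
        have hprod : |∏ i, v i (r i)| ≤ ∏ i, ‖v i‖ := by
          rw [Finset.abs_prod]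
          apply Finset.prod_le_prod (fun _ _ => abs_nonneg _)
          intro i _
          have h := abs_real_inner_le_norm (EuclideanSpace.single (r i) (1:ℝ)) (v i)
          rw [EuclideanSpace.inner_single_left] at h
          simpa using h
        have hg : |T (fun i => EuclideanSpace.single (r i) (1:ℝ))| = |gco n u j r z| := rfl
        rw [hg, mul_comm (|gco n u j r z|) (∏ i, ‖v i‖)]
        exact mul_le_mul_of_nonneg_right hprod (abs_nonneg _)
    _ = (∑ m : Fin j → Fin n, |gco n u j m z|) * ∏ i, ‖v i‖ := by
        rw [Finset.sum_mul]


variable {n : ℕ}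

-- integrable: continuous function with compact support on EuclideanSpace
lemma integrable_cs {F : EuclideanSpace ℝ (Fin n) → ℝ} (hFc : Continuous F)
    (hF : HasCompactSupport F) : Integrable F :=
  hFc.integrable_of_hasCompactSupport hF

-- Cauchy-Schwarz for continuous compactly supported functions
lemma cs_int {F G : EuclideanSpace ℝ (Fin n) → ℝ} (hFc : Continuous F) (hGc : Continuous G)
    (hF : HasCompactSupport F) (hG : HasCompactSupport G) :
    ∫ z, |F z| * |G z| ≤ Real.sqrt (∫ z, (F z)^2) * Real.sqrt (∫ z, (G z)^2) := by
  have hconj : Real.HolderConjugate 2 2 := Real.HolderConjugate.two_two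
  have hFm : MemLp (fun z => |F z|) (ENNReal.ofReal 2) volume :=
    (hFc.abs).memLp_of_hasCompactSupport (hF.comp_left (g := abs) abs_zero)
  have hGm : MemLp (fun z => |G z|) (ENNReal.ofReal 2) volume :=
    (hGc.abs).memLp_of_hasCompactSupport (hG.comp_left (g := abs) abs_zero)
  have h := integral_mul_le_Lp_mul_Lq_of_nonneg (μ := volume) hconj
    (f := fun z => |F z|) (g := fun z => |G z|)
    (Filter.Eventually.of_forall (fun z => abs_nonneg _))
    (Filter.Eventually.of_forall (fun z => abs_nonneg _)) hFm hGm
  have e1 : ∀ (H : EuclideanSpace ℝ (Fin n) → ℝ),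
      (∫ z, |H z| ^ (2:ℝ)) = ∫ z, (H z)^2 := by
    intro H
    apply integral_congr_ae
    apply Filter.Eventually.of_forall
    intro z
    show |H z| ^ (2:ℝ) = H z ^ 2
    rw [show ((2):ℝ) = ((2:ℕ):ℝ) by norm_num]
    rw [Real.rpow_natCast]
    exact sq_abs _
  rw [e1 F, e1 G] at h
  calc ∫ z, |F z| * |G z| ≤ (∫ z, (F z)^2) ^ (1/2:ℝ) * (∫ z, (G z)^2) ^ (1/2:ℝ) := h
    _ = Real.sqrt (∫ z, (F z)^2) * Real.sqrt (∫ z, (G z)^2) := by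
        rw [Real.sqrt_eq_rpow, Real.sqrt_eq_rpow]

-- quadratic absorption: X ≤ A*B + c*A*√X  ⇒  X ≤ 2AB + c²A²
lemma quad_absorb {X A B c : ℝ} (hX : 0 ≤ X) (hA : 0 ≤ A) (hB : 0 ≤ B) (hc : 0 ≤ c)
    (h : X ≤ A*B + c*A*Real.sqrt X) : X ≤ 2*A*B + c^2*A^2 := by
  have hs : Real.sqrt X ^ 2 = X := Real.sq_sqrt hX
  have hsn : 0 ≤ Real.sqrt X := Real.sqrt_nonneg X
  nlinarith [sq_nonneg (c*A - Real.sqrt X), sq_nonneg (Real.sqrt X)]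

-- Young: 2AB ≤ εB² + A²/ε
lemma young {A B ε : ℝ} (hε : 0 < ε) :
    2*A*B ≤ ε*B^2 + A^2/ε := by
  have key : 2*A*B*ε ≤ ε*B^2*ε + A^2 := by nlinarith [sq_nonneg (ε*B - A)]
  calc 2*A*B = (2*A*B*ε)/ε := by field_simp
    _ ≤ (ε*B^2*ε + A^2)/ε := by gcongr
    _ = ε*B^2 + A^2/ε := by field_simp


section CSHelpers
variable {F G : EuclideanSpace ℝ (Fin n) → ℝ}

lemma hcs_mul_first (h : HasCompactSupport F) : HasCompactSupport (fun z => F z * G z) :=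
  h.mul_right

lemma hcs_mul_second (h : HasCompactSupport G) : HasCompactSupport (fun z => F z * G z) :=
  h.mul_left

lemma hcs_abs (h : HasCompactSupport F) : HasCompactSupport (fun z => |F z|) :=
  h.comp_left abs_zero

end CSHelpers


-- The key one-step integration-by-parts estimate.
set_option maxHeartbeats 1000000 in
lemma key_estimate (a ε : ℝ) (hε : 0 < ε) (i : Fin n)
    (f Df DDf : EuclideanSpace ℝ (Fin n) → ℝ)
    (hf : ContDiff ℝ (⊤:ℕ∞) f) (hDf : ContDiff ℝ (⊤:ℕ∞) Df) (hDDfc : Continuous DDf)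
    (hcf : HasCompactSupport f) (hcDf : HasCompactSupport Df) (hcDDf : HasCompactSupport DDf)
    (hd1 : ∀ z, fderiv ℝ f z (EuclideanSpace.single i 1) = Df z)
    (hd2 : ∀ z, fderiv ℝ Df z (EuclideanSpace.single i 1) = DDf z) :
    ∫ z, (Df z)^2 * JB n a z ≤
      ε * (∫ z, (DDf z)^2 * JB n (a+2) z) + (1/ε + a^2) * ∫ z, (f z)^2 * JB n (a-2) z := by
  set eᵢ := EuclideanSpace.single i (1:ℝ) with heᵢ
  have hei : ‖eᵢ‖ ≤ 1 := by rw [heᵢ, EuclideanSpace.norm_single]; simp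
  have hfc : Continuous f := hf.continuous
  have hDfc : Continuous Df := hDf.continuous
  have hfd : Differentiable ℝ f := hf.differentiable (by simp)
  have hDfd : Differentiable ℝ Df := hDf.differentiable (by simp)
  have hDW : Continuous (fun z => fderiv ℝ (JB n a) z eᵢ) := continuous_fderiv_JB a eᵢ
  -- abbreviations
  set X := ∫ z, (Df z)^2 * JB n a z with hX
  set A2 := ∫ z, (f z)^2 * JB n (a-2) z with hA2
  set B2 := ∫ z, (DDf z)^2 * JB n (a+2) z with hB2
  have hXnn : 0 ≤ X := integral_nonneg (fun z => mul_nonneg (sq_nonneg _) (JB_nonneg _ _))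
  have hA2nn : 0 ≤ A2 := integral_nonneg (fun z => mul_nonneg (sq_nonneg _) (JB_nonneg _ _))
  have hB2nn : 0 ≤ B2 := integral_nonneg (fun z => mul_nonneg (sq_nonneg _) (JB_nonneg _ _))
  -- product rule pointwise
  have hprod : ∀ z, fderiv ℝ (fun y => Df y * JB n a y) z eᵢ
      = Df z * fderiv ℝ (JB n a) z eᵢ + JB n a z * DDf z := by
    intro z
    rw [fderiv_fun_mul (hDfd z) (differentiable_JB a z)]
    simp only [ContinuousLinearMap.add_apply, ContinuousLinearMap.coe_smul', Pi.smul_apply,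
      smul_eq_mul]
    rw [hd2 z]
  -- differentiability of the product
  have hdiffprod : Differentiable ℝ (fun y => Df y * JB n a y) :=
    hDfd.mul (differentiable_JB a)
  -- integrability hypotheses for the IBP lemma
  have hint1 : Integrable (fun z => fderiv ℝ (fun y => Df y * JB n a y) z eᵢ * f z) := by
    apply integrable_cs
    · have : Continuous (fun z => (Df z * fderiv ℝ (JB n a) z eᵢ + JB n a z * DDf z) * f z) := by
        exact (((hDfc.mul hDW).add ((continuous_JB a).mul hDDfc)).mul hfc)
      exact this.congr (fun z => by rw [hprod z])
    · exact hcs_mul_second hcf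
  have hint2 : Integrable (fun z => (Df z * JB n a z) * fderiv ℝ f z eᵢ) := by
    apply integrable_cs
    · have : Continuous (fun z => (Df z * JB n a z) * Df z) :=
        ((hDfc.mul (continuous_JB a)).mul hDfc)
      exact this.congr (fun z => by rw [hd1 z])
    · have : HasCompactSupport (fun z => (Df z * JB n a z) * Df z) := hcs_mul_second hcDf
      have heq : (fun z => (Df z * JB n a z) * fderiv ℝ f z eᵢ)
          = (fun z => (Df z * JB n a z) * Df z) := by
        funext z; rw [hd1 z]
      rw [heq]
      exact this
  have hint3 : Integrable (fun z => (Df z * JB n a z) * f z) := by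
    apply integrable_cs
    · exact (hDfc.mul (continuous_JB a)).mul hfc
    · exact hcs_mul_second hcf
  -- integration by parts
  have hibp := integral_mul_fderiv_eq_neg_fderiv_mul_of_integrable
    (μ := volume) (f := fun y => Df y * JB n a y) (g := f) (v := eᵢ)
    hint1 hint2 hint3 (fun x _ => hdiffprod x) (fun x _ => hfd x)
  have hXeq : X = - ∫ z, (Df z * fderiv ℝ (JB n a) z eᵢ + JB n a z * DDf z) * f z := by
    rw [hX]
    have hl : ∫ z, (Df z)^2 * JB n a z = ∫ z, (Df z * JB n a z) * fderiv ℝ f z eᵢ := by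
      apply integral_congr_ae
      apply Filter.Eventually.of_forall
      intro z
      simp only [hd1]
      ring
    rw [hl, hibp]
    congr 1
    apply integral_congr_ae
    apply Filter.Eventually.of_forall
    intro z
    simp only [hprod]
  -- bound X by integral of absolute values
  have habs : X ≤ ∫ z, |(Df z * fderiv ℝ (JB n a) z eᵢ + JB n a z * DDf z) * f z| := by
    rw [hXeq]
    have h1 : -∫ z, (Df z * fderiv ℝ (JB n a) z eᵢ + JB n a z * DDf z) * f z
        ≤ |∫ z, (Df z * fderiv ℝ (JB n a) z eᵢ + JB n a z * DDf z) * f z| := neg_le_abs _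
    refine h1.trans ?_
    have h2 := norm_integral_le_integral_norm
      (μ := volume) (fun z => (Df z * fderiv ℝ (JB n a) z eᵢ + JB n a z * DDf z) * f z)
    simpa only [Real.norm_eq_abs] using h2
  -- pointwise bound on the integrand
  have hpt : ∀ z, |(Df z * fderiv ℝ (JB n a) z eᵢ + JB n a z * DDf z) * f z|
      ≤ |a| * ((|Df z| * JB n (a/2) z) * (|f z| * JB n ((a-2)/2) z))
        + (|DDf z| * JB n ((a+2)/2) z) * (|f z| * JB n ((a-2)/2) z) := by
    intro z
    have hDWb : |fderiv ℝ (JB n a) z eᵢ| ≤ |a| * JB n (a-1) z := abs_fderiv_JB_le a z hei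
    calc |(Df z * fderiv ℝ (JB n a) z eᵢ + JB n a z * DDf z) * f z|
        ≤ (|Df z| * |fderiv ℝ (JB n a) z eᵢ| + JB n a z * |DDf z|) * |f z| := by
          rw [abs_mul]
          apply mul_le_mul_of_nonneg_right _ (abs_nonneg _)
          refine (abs_add_le _ _).trans ?_
          rw [abs_mul, abs_mul, abs_JB]
      _ ≤ (|Df z| * (|a| * JB n (a-1) z) + JB n a z * |DDf z|) * |f z| := by
          apply mul_le_mul_of_nonneg_right _ (abs_nonneg _)
          apply add_le_add_left
          exact mul_le_mul_of_nonneg_left hDWb (abs_nonneg _)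
      _ = |a| * ((|Df z| * JB n (a/2) z) * (|f z| * JB n ((a-2)/2) z))
          + (|DDf z| * JB n ((a+2)/2) z) * (|f z| * JB n ((a-2)/2) z) := by
          have e1 : JB n (a/2) z * JB n ((a-2)/2) z = JB n (a-1) z := by
            rw [JB_mul]; ring_nf
          have e2 : JB n ((a+2)/2) z * JB n ((a-2)/2) z = JB n a z := by
            rw [JB_mul]; ring_nf
          rw [← e1, ← e2]
          ring
  -- integrability of both sides of pointwise bound
  have hintL : Integrable (fun z =>
      |(Df z * fderiv ℝ (JB n a) z eᵢ + JB n a z * DDf z) * f z|) := by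
    apply integrable_cs
    · exact (((hDfc.mul hDW).add ((continuous_JB a).mul hDDfc)).mul hfc).abs
    · exact hcs_abs (hcs_mul_second hcf)
  have hintT1 : Integrable (fun z => (|Df z| * JB n (a/2) z) * (|f z| * JB n ((a-2)/2) z)) := by
    apply integrable_cs
    · exact (hDfc.abs.mul (continuous_JB _)).mul (hfc.abs.mul (continuous_JB _))
    · exact hcs_mul_first (hcs_mul_first (hcs_abs hcDf))
  have hintT2 : Integrable (fun z =>
      (|DDf z| * JB n ((a+2)/2) z) * (|f z| * JB n ((a-2)/2) z)) := by
    apply integrable_cs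
    · exact (hDDfc.abs.mul (continuous_JB _)).mul (hfc.abs.mul (continuous_JB _))
    · exact hcs_mul_first (hcs_mul_first (hcs_abs hcDDf))
  -- Cauchy-Schwarz applications
  have hcs1 : ∫ z, (|Df z| * JB n (a/2) z) * (|f z| * JB n ((a-2)/2) z)
      ≤ Real.sqrt X * Real.sqrt A2 := by
    have h := cs_int (F := fun z => Df z * JB n (a/2) z) (G := fun z => f z * JB n ((a-2)/2) z)
      (hDfc.mul (continuous_JB _)) (hfc.mul (continuous_JB _))
      (hcs_mul_first hcDf) (hcs_mul_first hcf)
    have e1 : ∀ z, |Df z * JB n (a/2) z| = |Df z| * JB n (a/2) z := by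
      intro z; rw [abs_mul, abs_JB]
    have e2 : ∀ z, |f z * JB n ((a-2)/2) z| = |f z| * JB n ((a-2)/2) z := by
      intro z; rw [abs_mul, abs_JB]
    have e3 : ∀ z, (Df z * JB n (a/2) z)^2 = (Df z)^2 * JB n a z := by
      intro z; rw [mul_pow, JB_sq]
      congr 2; ring
    have e4 : ∀ z, (f z * JB n ((a-2)/2) z)^2 = (f z)^2 * JB n (a-2) z := by
      intro z; rw [mul_pow, JB_sq]
      congr 2; ring
    simp only [e1, e2, e3, e4] at h
    exact h
  have hcs2 : ∫ z, (|DDf z| * JB n ((a+2)/2) z) * (|f z| * JB n ((a-2)/2) z)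
      ≤ Real.sqrt B2 * Real.sqrt A2 := by
    have h := cs_int (F := fun z => DDf z * JB n ((a+2)/2) z)
      (G := fun z => f z * JB n ((a-2)/2) z)
      (hDDfc.mul (continuous_JB _)) (hfc.mul (continuous_JB _))
      (hcs_mul_first hcDDf) (hcs_mul_first hcf)
    have e1 : ∀ z, |DDf z * JB n ((a+2)/2) z| = |DDf z| * JB n ((a+2)/2) z := by
      intro z; rw [abs_mul, abs_JB]
    have e2 : ∀ z, |f z * JB n ((a-2)/2) z| = |f z| * JB n ((a-2)/2) z := by
      intro z; rw [abs_mul, abs_JB]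
    have e3 : ∀ z, (DDf z * JB n ((a+2)/2) z)^2 = (DDf z)^2 * JB n (a+2) z := by
      intro z; rw [mul_pow, JB_sq]
      congr 2; ring
    have e4 : ∀ z, (f z * JB n ((a-2)/2) z)^2 = (f z)^2 * JB n (a-2) z := by
      intro z; rw [mul_pow, JB_sq]
      congr 2; ring
    simp only [e1, e2, e3, e4] at h
    exact h
  -- assemble
  have hmain : X ≤ Real.sqrt A2 * Real.sqrt B2 + |a| * Real.sqrt A2 * Real.sqrt X := by
    calc X ≤ ∫ z, |(Df z * fderiv ℝ (JB n a) z eᵢ + JB n a z * DDf z) * f z| := habs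
      _ ≤ ∫ z, (|a| * ((|Df z| * JB n (a/2) z) * (|f z| * JB n ((a-2)/2) z))
          + (|DDf z| * JB n ((a+2)/2) z) * (|f z| * JB n ((a-2)/2) z)) := by
          apply integral_mono hintL ((hintT1.const_mul _).add hintT2) hpt
      _ = |a| * (∫ z, (|Df z| * JB n (a/2) z) * (|f z| * JB n ((a-2)/2) z))
          + ∫ z, (|DDf z| * JB n ((a+2)/2) z) * (|f z| * JB n ((a-2)/2) z) := by
          rw [integral_add (hintT1.const_mul _) hintT2, MeasureTheory.integral_const_mul]
      _ ≤ |a| * (Real.sqrt X * Real.sqrt A2) + Real.sqrt B2 * Real.sqrt A2 := by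
          apply add_le_add
          · exact mul_le_mul_of_nonneg_left hcs1 (abs_nonneg _)
          · exact hcs2
      _ = Real.sqrt A2 * Real.sqrt B2 + |a| * Real.sqrt A2 * Real.sqrt X := by ring
  have habsorb := quad_absorb hXnn (Real.sqrt_nonneg A2) (Real.sqrt_nonneg B2)
    (abs_nonneg a) hmain
  have hyoung := young (A := Real.sqrt A2) (B := Real.sqrt B2) hε
  have hsA : Real.sqrt A2 ^ 2 = A2 := Real.sq_sqrt hA2nn
  have hsB : Real.sqrt B2 ^ 2 = B2 := Real.sq_sqrt hB2nn
  have haa : |a|^2 = a^2 := sq_abs a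
  calc X ≤ 2*(Real.sqrt A2)*(Real.sqrt B2) + |a|^2*(Real.sqrt A2)^2 := habsorb
    _ ≤ (ε*(Real.sqrt B2)^2 + (Real.sqrt A2)^2/ε) + |a|^2*(Real.sqrt A2)^2 := by
        apply add_le_add_left hyoung
    _ = ε * B2 + (1/ε + a^2) * A2 := by
        rw [hsA, hsB, haa]; ring

noncomputable def Ig (n : ℕ) (u : EuclideanSpace ℝ (Fin n) → ℝ) (j : ℕ) (m : Fin j → Fin n) : ℝ :=
  ∫ z, (gco n u j m z)^2 * JB n (2*(j:ℝ)+1-n) z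

noncomputable def P (n : ℕ) (u : EuclideanSpace ℝ (Fin n) → ℝ) (j : ℕ) : ℝ :=
  ∑ m : Fin j → Fin n, Ig n u j m

lemma Ig_nonneg (u : EuclideanSpace ℝ (Fin n) → ℝ) (j : ℕ) (m : Fin j → Fin n) :
    0 ≤ Ig n u j m :=
  integral_nonneg (fun z => mul_nonneg (sq_nonneg _) (JB_nonneg _ _))

lemma P_nonneg (u : EuclideanSpace ℝ (Fin n) → ℝ) (j : ℕ) : 0 ≤ P n u j :=
  Finset.sum_nonneg (fun m _ => Ig_nonneg u j m)

lemma Ig_step {u : EuclideanSpace ℝ (Fin n) → ℝ} (hu : ContDiff ℝ (⊤:ℕ∞) u)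
    (hc : HasCompactSupport u) (j : ℕ) (m : Fin j → Fin n) (i : Fin n) {ε : ℝ} (hε : 0 < ε) :
    Ig n u (j+1) (Fin.cons i m) ≤ ε * Ig n u (j+2) (Fin.cons i (Fin.cons i m))
      + (1/ε + (2*(j:ℝ)+3-n)^2) * Ig n u j m := by
  have hkey := key_estimate (a := 2*(j:ℝ)+3-n) (ε := ε) hε i
    (gco n u j m) (gco n u (j+1) (Fin.cons i m)) (gco n u (j+2) (Fin.cons i (Fin.cons i m)))
    (contDiff_gco hu j m) (contDiff_gco hu (j+1) (Fin.cons i m))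
    (continuous_gco hu (j+2) _)
    (hasCompactSupport_gco hc j m) (hasCompactSupport_gco hc (j+1) _)
    (hasCompactSupport_gco hc (j+2) _)
    (fun z => fderiv_gco hu j m i z)
    (fun z => by
      have h := fderiv_gco hu (j+1) (Fin.cons i m) i z
      rw [h])
  have e0 : 2*(j:ℝ)+3-n = 2*((j+1:ℕ):ℝ)+1-n := by push_cast; ring
  have e1 : 2*(j:ℝ)+3-n+2 = 2*((j+2:ℕ):ℝ)+1-n := by push_cast; ring
  have e2 : 2*(j:ℝ)+3-n-2 = 2*((j:ℕ):ℝ)+1-n := by push_cast; ring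
  rw [e1] at hkey
  rw [e2] at hkey
  nth_rewrite 1 [e0] at hkey
  exact hkey

lemma P_step {u : EuclideanSpace ℝ (Fin n) → ℝ} (hu : ContDiff ℝ (⊤:ℕ∞) u)
    (hc : HasCompactSupport u) (j : ℕ) {ε : ℝ} (hε : 0 < ε) :
    P n u (j+1) ≤ ε * P n u (j+2) + (n:ℝ) * (1/ε + (2*(j:ℝ)+3-n)^2) * P n u j := by
  classical
  set c : ℝ := 1/ε + (2*(j:ℝ)+3-n)^2 with hcdef
  have hP1 : P n u (j+1) = ∑ p : Fin n × (Fin j → Fin n), Ig n u (j+1) (Fin.cons p.1 p.2) := by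
    rw [P]
    exact (Fintype.sum_equiv (Fin.consEquiv (fun _ : Fin (j+1) => Fin n))
      (fun p => Ig n u (j+1) (Fin.cons p.1 p.2)) (fun m' => Ig n u (j+1) m')
      (fun p => rfl)).symm
  have hbound : ∀ p : Fin n × (Fin j → Fin n),
      Ig n u (j+1) (Fin.cons p.1 p.2) ≤ ε * Ig n u (j+2) (Fin.cons p.1 (Fin.cons p.1 p.2))
        + c * Ig n u j p.2 := fun p => Ig_step hu hc j p.2 p.1 hε
  have hsum2 : ∑ p : Fin n × (Fin j → Fin n), Ig n u (j+2) (Fin.cons p.1 (Fin.cons p.1 p.2))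
      ≤ P n u (j+2) := by
    rw [P]
    set φ : Fin n × (Fin j → Fin n) → (Fin (j+2) → Fin n) :=
      fun p => Fin.cons p.1 (Fin.cons p.1 p.2) with hφ
    have hinj : Function.Injective φ := by
      intro p q h
      have h0 : p.1 = q.1 := by
        have := congrFun h 0
        simpa [hφ] using this
      have ht : p.2 = q.2 := by
        have h1 : Fin.tail (Fin.tail (φ p)) = Fin.tail (Fin.tail (φ q)) := by rw [h]
        simpa [hφ, Fin.tail_cons] using h1
      exact Prod.ext h0 ht
    calc ∑ p : Fin n × (Fin j → Fin n), Ig n u (j+2) (φ p)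
        = ∑ m'' ∈ Finset.univ.image φ, Ig n u (j+2) m'' := by
          rw [Finset.sum_image (fun p _ q _ h => hinj h)]
      _ ≤ ∑ m'' : Fin (j+2) → Fin n, Ig n u (j+2) m'' := by
          apply Finset.sum_le_sum_of_subset_of_nonneg (Finset.subset_univ _)
          intro m'' _ _
          exact Ig_nonneg u (j+2) m''
  have hsum0 : ∑ p : Fin n × (Fin j → Fin n), Ig n u j p.2 = (n:ℝ) * P n u j := by
    rw [P, Fintype.sum_prod_type]
    have hconst : ∀ x : Fin n, ∑ y : Fin j → Fin n, Ig n u j (x, y).2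
        = ∑ y : Fin j → Fin n, Ig n u j y := fun x => rfl
    rw [Finset.sum_congr rfl (fun x _ => hconst x), Finset.sum_const, Finset.card_univ,
      Fintype.card_fin]
    simp [nsmul_eq_mul]
  calc P n u (j+1) = ∑ p : Fin n × (Fin j → Fin n), Ig n u (j+1) (Fin.cons p.1 p.2) := hP1
    _ ≤ ∑ p : Fin n × (Fin j → Fin n),
        (ε * Ig n u (j+2) (Fin.cons p.1 (Fin.cons p.1 p.2)) + c * Ig n u j p.2) :=
        Finset.sum_le_sum (fun p _ => hbound p)
    _ = ε * (∑ p : Fin n × (Fin j → Fin n), Ig n u (j+2) (Fin.cons p.1 (Fin.cons p.1 p.2)))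
        + c * (∑ p : Fin n × (Fin j → Fin n), Ig n u j p.2) := by
        rw [Finset.sum_add_distrib, Finset.mul_sum, Finset.mul_sum]
    _ ≤ ε * P n u (j+2) + c * ((n:ℝ) * P n u j) := by
        apply add_le_add
        · exact mul_le_mul_of_nonneg_left hsum2 hε.le
        · rw [hsum0]
    _ = ε * P n u (j+2) + (n:ℝ) * c * P n u j := by ring

-- One-step with uniform constant (lemma A)
lemma chainA (n : ℕ) (j : ℕ) {ε : ℝ} (hε : 0 < ε) :
    ∃ C : ℝ, 0 < C ∧ ∀ u : EuclideanSpace ℝ (Fin n) → ℝ, ContDiff ℝ (⊤:ℕ∞) u →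
      HasCompactSupport u → P n u (j+1) ≤ ε * P n u (j+2) + C * P n u j := by
  refine ⟨(n:ℝ) * (1/ε + (2*(j:ℝ)+3-n)^2) + 1, by positivity, fun u hu hc => ?_⟩
  have h := P_step hu hc j hε
  have hP := P_nonneg u j
  nlinarith [h, hP]

-- Absorbed one-step (lemma B): P j ≤ ε P (j+1) + C P 0
lemma chainB (n : ℕ) (j : ℕ) : ∀ ε : ℝ, 0 < ε →
    ∃ C : ℝ, 0 < C ∧ ∀ u : EuclideanSpace ℝ (Fin n) → ℝ, ContDiff ℝ (⊤:ℕ∞) u →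
      HasCompactSupport u → P n u j ≤ ε * P n u (j+1) + C * P n u 0 := by
  induction j with
  | zero =>
    intro ε hε
    refine ⟨1, one_pos, fun u hu hc => ?_⟩
    have h1 := P_nonneg u 1
    nlinarith
  | succ j ih =>
    intro ε hε
    obtain ⟨C₁, hC₁, h₁⟩ := chainA n j (half_pos hε)
    obtain ⟨C₂, hC₂, h₂⟩ := ih (1/(2*C₁)) (by positivity)
    refine ⟨2*C₁*C₂, by positivity, fun u hu hc => ?_⟩
    have hA := h₁ u hu hc
    have hB := h₂ u hu hc
    have h0 := P_nonneg u 0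
    have h2 := P_nonneg u (j+2)
    have h1' := P_nonneg u (j+1)
    -- P(j+1) ≤ (ε/2) P(j+2) + C₁ (1/(2C₁) P(j+1) + C₂ P0)
    have hcomb : P n u (j+1) ≤ (ε/2) * P n u (j+2) + C₁ * ((1/(2*C₁)) * P n u (j+1)
        + C₂ * P n u 0) := by
      calc P n u (j+1) ≤ (ε/2) * P n u (j+2) + C₁ * P n u j := hA
        _ ≤ (ε/2) * P n u (j+2) + C₁ * ((1/(2*C₁)) * P n u (j+1) + C₂ * P n u 0) := by
            apply add_le_add_right
            exact mul_le_mul_of_nonneg_left hB hC₁.le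
    have e : C₁ * ((1/(2*C₁)) * P n u (j+1) + C₂ * P n u 0)
        = (1/2) * P n u (j+1) + C₁*C₂*P n u 0 := by
      field_simp
    rw [e] at hcomb
    linarith

-- iterated (lemma C): for l ≥ 1
lemma chainC (n : ℕ) (l : ℕ) (hl : 1 ≤ l) : ∀ j : ℕ, ∀ ε : ℝ, 0 < ε →
    ∃ C : ℝ, 0 < C ∧ ∀ u : EuclideanSpace ℝ (Fin n) → ℝ, ContDiff ℝ (⊤:ℕ∞) u →
      HasCompactSupport u → P n u j ≤ ε * P n u (j+l) + C * P n u 0 := by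
  induction l, hl using Nat.le_induction with
  | base => exact fun j ε hε => chainB n j ε hε
  | succ l hl ih =>
    intro j ε hε
    obtain ⟨C₁, hC₁, h₁⟩ := ih j 1 one_pos
    obtain ⟨C₂, hC₂, h₂⟩ := chainB n (j+l) ε hε
    refine ⟨C₁ + C₂, by positivity, fun u hu hc => ?_⟩
    have hA := h₁ u hu hc
    have hB := h₂ u hu hc
    have h0 := P_nonneg u 0
    have : P n u (j + (l+1)) = P n u ((j+l)+1) := by rw [← Nat.add_assoc]
    rw [this]
    nlinarith [hA, hB]

noncomputable def L (n : ℕ) (u : EuclideanSpace ℝ (Fin n) → ℝ) (j : ℕ) : ℝ :=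
  ∫ z, ‖iteratedFDeriv ℝ j u z‖^2 * JB n (2*(j:ℝ)+1-(n:ℝ)) z

lemma L_nonneg (u : EuclideanSpace ℝ (Fin n) → ℝ) (j : ℕ) : 0 ≤ L n u j :=
  integral_nonneg (fun z => mul_nonneg (sq_nonneg _) (JB_nonneg _ _))

lemma integrable_L_integrand {u : EuclideanSpace ℝ (Fin n) → ℝ} (hu : ContDiff ℝ (⊤:ℕ∞) u)
    (hc : HasCompactSupport u) (j : ℕ) (a : ℝ) :
    Integrable (fun z => ‖iteratedFDeriv ℝ j u z‖^2 * JB n a z) := by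
  apply integrable_cs
  · exact (((contDiff_itF hu j).continuous.norm).pow 2).mul (continuous_JB a)
  · apply hcs_mul_first
    exact (hc.iteratedFDeriv j).comp_left (g := fun T => ‖T‖^2) (by simp)

lemma integrable_Ig_integrand {u : EuclideanSpace ℝ (Fin n) → ℝ} (hu : ContDiff ℝ (⊤:ℕ∞) u)
    (hc : HasCompactSupport u) (j : ℕ) (m : Fin j → Fin n) (a : ℝ) :
    Integrable (fun z => (gco n u j m z)^2 * JB n a z) := by
  apply integrable_cs
  · exact ((continuous_gco hu j m).pow 2).mul (continuous_JB a)
  · apply hcs_mul_first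
    exact (hasCompactSupport_gco hc j m).comp_left (g := fun x => x^2) (by simp)

lemma card_fun_eq (j : ℕ) : (Fintype.card (Fin j → Fin n) : ℝ) = (n:ℝ)^j := by
  simp [Fintype.card_fun]

lemma L_le_P {u : EuclideanSpace ℝ (Fin n) → ℝ} (hu : ContDiff ℝ (⊤:ℕ∞) u)
    (hc : HasCompactSupport u) (j : ℕ) : L n u j ≤ (n:ℝ)^j * P n u j := by
  set a : ℝ := 2*(j:ℝ)+1-(n:ℝ) with ha
  have hpt : ∀ z, ‖iteratedFDeriv ℝ j u z‖^2 * JB n a z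
      ≤ (n:ℝ)^j * ∑ m : Fin j → Fin n, (gco n u j m z)^2 * JB n a z := by
    intro z
    have h1 : ‖iteratedFDeriv ℝ j u z‖^2 ≤ (∑ m : Fin j → Fin n, |gco n u j m z|)^2 := by
      apply pow_le_pow_left₀ (norm_nonneg _) (norm_itF_le_sum j z)
    have h2 : (∑ m : Fin j → Fin n, |gco n u j m z|)^2
        ≤ (n:ℝ)^j * ∑ m : Fin j → Fin n, (gco n u j m z)^2 := by
      have h := sq_sum_le_card_mul_sum_sq (s := (Finset.univ : Finset (Fin j → Fin n)))
        (f := fun m => |gco n u j m z|)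
      simp only [sq_abs] at h
      calc (∑ m : Fin j → Fin n, |gco n u j m z|)^2
          ≤ (Finset.card (Finset.univ : Finset (Fin j → Fin n)) : ℝ)
            * ∑ m : Fin j → Fin n, (gco n u j m z)^2 := h
        _ = (n:ℝ)^j * ∑ m : Fin j → Fin n, (gco n u j m z)^2 := by
            rw [Finset.card_univ, card_fun_eq]
    calc ‖iteratedFDeriv ℝ j u z‖^2 * JB n a z
        ≤ ((n:ℝ)^j * ∑ m : Fin j → Fin n, (gco n u j m z)^2) * JB n a z := by
          exact mul_le_mul_of_nonneg_right (h1.trans h2) (JB_nonneg _ _)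
      _ = (n:ℝ)^j * ∑ m : Fin j → Fin n, (gco n u j m z)^2 * JB n a z := by
          rw [mul_assoc]
          congr 1
          rw [Finset.sum_mul]
  have hintR : Integrable (fun z =>
      (n:ℝ)^j * ∑ m : Fin j → Fin n, (gco n u j m z)^2 * JB n a z) := by
    apply Integrable.const_mul
    apply integrable_finset_sum
    intro m _
    exact integrable_Ig_integrand hu hc j m a
  calc L n u j ≤ ∫ z, (n:ℝ)^j * ∑ m : Fin j → Fin n, (gco n u j m z)^2 * JB n a z :=
        integral_mono (integrable_L_integrand hu hc j a) hintR hpt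
    _ = (n:ℝ)^j * ∑ m : Fin j → Fin n, ∫ z, (gco n u j m z)^2 * JB n a z := by
        rw [MeasureTheory.integral_const_mul]
        congr 1
        exact integral_finset_sum _ (fun m _ => integrable_Ig_integrand hu hc j m a)
    _ = (n:ℝ)^j * P n u j := rfl

lemma P_le_L {u : EuclideanSpace ℝ (Fin n) → ℝ} (hu : ContDiff ℝ (⊤:ℕ∞) u)
    (hc : HasCompactSupport u) (j : ℕ) : P n u j ≤ (n:ℝ)^j * L n u j := by
  set a : ℝ := 2*(j:ℝ)+1-(n:ℝ) with ha
  have hsingle : ∀ m : Fin j → Fin n, Ig n u j m ≤ L n u j := by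
    intro m
    apply integral_mono (integrable_Ig_integrand hu hc j m a) (integrable_L_integrand hu hc j a)
    intro z
    apply mul_le_mul_of_nonneg_right _ (JB_nonneg _ _)
    rw [← sq_abs (gco n u j m z)]
    apply pow_le_pow_left₀ (abs_nonneg _)
    exact abs_gco_le j m z
  calc P n u j ≤ ∑ _m : Fin j → Fin n, L n u j := Finset.sum_le_sum (fun m _ => hsingle m)
    _ = (n:ℝ)^j * L n u j := by
        rw [Finset.sum_const, Finset.card_univ, nsmul_eq_mul, card_fun_eq]

end Stmt11

open Stmt11 in
lemma Dnorm_eq_sqrt_L (n j : ℕ) (u : EuclideanSpace ℝ (Fin n) → ℝ) :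
    Dnorm n j u = Real.sqrt (L n u j) := by
  rw [Dnorm, L]
  congr 1
  apply integral_congr_ae
  apply Filter.Eventually.of_forall
  intro z
  show (‖iteratedFDeriv ℝ j u z‖ * Real.sqrt (1 + ‖z‖^2) ^ ((j:ℝ) + (1 - (n:ℝ))/2))^2
    = ‖iteratedFDeriv ℝ j u z‖^2 * JB n (2*(j:ℝ)+1-(n:ℝ)) z
  have hb : (0:ℝ) ≤ 1 + ‖z‖^2 := (base_pos z).le
  have h1 : Real.sqrt (1 + ‖z‖^2) ^ ((j:ℝ) + (1 - (n:ℝ))/2)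
      = JB n ((j:ℝ) + (1 - (n:ℝ))/2) z := by
    rw [Real.sqrt_eq_rpow, ← Real.rpow_mul hb, JB]
    congr 1
    ring
  rw [mul_pow, h1, JB_sq]
  congr 2
  push_cast
  ring



open Stmt11 in
/-- Interpolation inequality for the weighted norms `D_j`: for every `ν > 0` and
`0 ≤ j < k` there is a constant `C = C(ν, j, k, n)` such that
`D_j(u) ≤ ν D_k(u) + C D_0(u)` for all `u ∈ C_c^∞(ℝⁿ)`. -/
theorem stmt11 (n k : ℕ) (hn : 1 ≤ n) (hk : 1 ≤ k) :
    ∀ ν : ℝ, 0 < ν → ∀ j : ℕ, j < k →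
      ∃ C : ℝ, 0 < C ∧ ∀ u : EuclideanSpace ℝ (Fin n) → ℝ,
        ContDiff ℝ (⊤:ℕ∞) u → HasCompactSupport u →
        Dnorm n j u ≤ ν * Dnorm n k u + C * Dnorm n 0 u := by
  intro ν hν j hjk
  have hnpos : (0:ℝ) < (n:ℝ) := by exact_mod_cast hn
  have hnj : (0:ℝ) < (n:ℝ)^j := by positivity
  have hnk : (0:ℝ) < (n:ℝ)^k := by positivity
  set ε : ℝ := ν^2 / ((n:ℝ)^j * (n:ℝ)^k) with hε
  have hεpos : 0 < ε := by positivity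
  have hl : 1 ≤ k - j := by omega
  obtain ⟨C₀, hC₀, h₀⟩ := chainC n (k - j) hl j ε hεpos
  have hjl : j + (k - j) = k := by omega
  refine ⟨Real.sqrt ((n:ℝ)^j * C₀) + 1,
    by have := Real.sqrt_nonneg ((n:ℝ)^j * C₀); linarith, fun u hu hc => ?_⟩
  have hP := h₀ u hu hc
  rw [hjl] at hP
  -- L j ≤ n^j P j ≤ n^j ε P k + n^j C₀ P 0 ≤ ν² L k + n^j C₀ L 0
  have hLj : L n u j ≤ ν^2 * L n u k + ((n:ℝ)^j * C₀) * L n u 0 := by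
    have h1 : L n u j ≤ (n:ℝ)^j * P n u j := L_le_P hu hc j
    have h2 : P n u k ≤ (n:ℝ)^k * L n u k := P_le_L hu hc k
    have h3 : P n u 0 ≤ (n:ℝ)^0 * L n u 0 := P_le_L hu hc 0
    rw [pow_zero, one_mul] at h3
    have h4 : (n:ℝ)^j * ε * ((n:ℝ)^k) = ν^2 := by
      rw [hε]
      field_simp
    calc L n u j ≤ (n:ℝ)^j * P n u j := h1
      _ ≤ (n:ℝ)^j * (ε * P n u k + C₀ * P n u 0) := by
          exact mul_le_mul_of_nonneg_left hP hnj.le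
      _ = (n:ℝ)^j * ε * P n u k + (n:ℝ)^j * C₀ * P n u 0 := by ring
      _ ≤ (n:ℝ)^j * ε * ((n:ℝ)^k * L n u k) + (n:ℝ)^j * C₀ * L n u 0 := by
          apply add_le_add
          · apply mul_le_mul_of_nonneg_left h2
            positivity
          · apply mul_le_mul_of_nonneg_left h3
            positivity
      _ = ν^2 * L n u k + ((n:ℝ)^j * C₀) * L n u 0 := by
          rw [← h4]; ring
  -- pass to square roots
  rw [Dnorm_eq_sqrt_L, Dnorm_eq_sqrt_L, Dnorm_eq_sqrt_L]
  have hLk := L_nonneg u k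
  have hL0 := L_nonneg u 0
  have hsplit : Real.sqrt (L n u j) ≤ Real.sqrt (ν^2 * L n u k + ((n:ℝ)^j * C₀) * L n u 0) :=
    Real.sqrt_le_sqrt hLj
  have hadd : Real.sqrt (ν^2 * L n u k + ((n:ℝ)^j * C₀) * L n u 0)
      ≤ Real.sqrt (ν^2 * L n u k) + Real.sqrt (((n:ℝ)^j * C₀) * L n u 0) := by
    set x := ν^2 * L n u k with hx
    set y := ((n:ℝ)^j * C₀) * L n u 0 with hy
    have hxnn : 0 ≤ x := by positivity
    have hynn : 0 ≤ y := by positivity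
    have h : x + y ≤ (Real.sqrt x + Real.sqrt y)^2 := by
      nlinarith [Real.sq_sqrt hxnn, Real.sq_sqrt hynn, Real.sqrt_nonneg x, Real.sqrt_nonneg y,
        mul_nonneg (Real.sqrt_nonneg x) (Real.sqrt_nonneg y)]
    calc Real.sqrt (x+y) ≤ Real.sqrt ((Real.sqrt x + Real.sqrt y)^2) := Real.sqrt_le_sqrt h
      _ = Real.sqrt x + Real.sqrt y := Real.sqrt_sq (by positivity)
  have h5 : Real.sqrt (ν^2 * L n u k) = ν * Real.sqrt (L n u k) := by
    rw [Real.sqrt_mul (by positivity), Real.sqrt_sq hν.le]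
  have h6 : Real.sqrt (((n:ℝ)^j * C₀) * L n u 0)
      = Real.sqrt ((n:ℝ)^j * C₀) * Real.sqrt (L n u 0) := by
    rw [Real.sqrt_mul (by positivity)]
  calc Real.sqrt (L n u j) ≤ Real.sqrt (ν^2 * L n u k) + Real.sqrt (((n:ℝ)^j * C₀) * L n u 0) :=
        hsplit.trans hadd
    _ = ν * Real.sqrt (L n u k) + Real.sqrt ((n:ℝ)^j * C₀) * Real.sqrt (L n u 0) := by
        rw [h5, h6]
    _ ≤ ν * Real.sqrt (L n u k) + (Real.sqrt ((n:ℝ)^j * C₀) + 1) * Real.sqrt (L n u 0) := by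
        apply add_le_add_right
        apply mul_le_mul_of_nonneg_right _ (Real.sqrt_nonneg _)
        linarith
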